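/- Let P be a finite (1+1+1)-free poset with at least 2 elements that is irreducible with respect to ordinal sum. Then P can be partitioned into two disjoint nonempty chains; in particular the width of P is exactly 2. -/

import Mathlib

/-- `P` is `(2+2)`-free: there are no four distinct elements `a, b, c, d` with `a < b` and
`c < d` such that each of `a, b` is incomparable with each of `c, d`. -/
def TwoTwoFree (P : Type*) [PartialOrder P] : Prop :=
  ¬ ∃ a b c d : P, a < b ∧ c < d ∧ a ≠ c ∧ a ≠ d ∧ b ≠ c ∧ b ≠ d ∧
    ¬ a ≤ c ∧ ¬ c ≤ a ∧ ¬ a ≤ d ∧ ¬ d ≤ a ∧ ¬ b ≤ c ∧ ¬ c ≤ b ∧ ¬ b ≤ d ∧ ¬ d ≤ b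

/-- `P` is `(1+1+1)`-free: `P` contains no antichain of three elements. -/
def OneOneOneFree (P : Type*) [PartialOrder P] : Prop :=
  ¬ ∃ a b c : P, a ≠ b ∧ a ≠ c ∧ b ≠ c ∧
    ¬ a ≤ b ∧ ¬ b ≤ a ∧ ¬ a ≤ c ∧ ¬ c ≤ a ∧ ¬ b ≤ c ∧ ¬ c ≤ b

/-- `P` is irreducible with respect to ordinal sum: `P` cannot be partitioned into two
nonempty subsets `A, B` such that `a < b` for every `a ∈ A` and `b ∈ B`. -/
def OrdinalSumIrreducible (P : Type*) [PartialOrder P] : Prop :=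
  ¬ ∃ A B : Set P, A.Nonempty ∧ B.Nonempty ∧ Disjoint A B ∧ A ∪ B = Set.univ ∧
    ∀ a ∈ A, ∀ b ∈ B, a < b

open Classical in
/-- helper: given two chains covering `S.erase a`, an element `x1` with `x1 ≤ a`
dominating all elements of `C1` incomparable to something in `C2`, cover `S`. -/
theorem helperStep {P : Type*} [PartialOrder P] [DecidableEq P]
    (S : Finset P) (a : P) (ha : a ∈ S)
    (C1 C2 : Finset P) (hU : C1 ∪ C2 = S.erase a) (hD : Disjoint C1 C2)
    (h1 : IsChain (· ≤ ·) (C1 : Set P)) (h2 : IsChain (· ≤ ·) (C2 : Set P))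
    (x1 : P) (hx1a : x1 ≤ a)
    (hmax : ∀ u ∈ C1, ∀ v ∈ C2, ¬ u ≤ v → ¬ v ≤ u → u ≤ x1) :
    ∃ A B : Finset P, A ∪ B = S ∧ Disjoint A B ∧
      IsChain (· ≤ ·) (A : Set P) ∧ IsChain (· ≤ ·) (B : Set P) := by
  classical
  refine ⟨insert a (C1.filter (· ≤ x1)), C2 ∪ C1.filter (fun z => ¬ z ≤ x1), ?_, ?_, ?_, ?_⟩
  · have : C1.filter (· ≤ x1) ∪ (C2 ∪ C1.filter (fun z => ¬ z ≤ x1)) = C1 ∪ C2 := by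
      ext z
      simp only [Finset.mem_union, Finset.mem_filter]
      tauto
    rw [Finset.insert_union, this, hU, Finset.insert_erase ha]
  · have haC : a ∉ C1 ∪ C2 := by rw [hU]; exact Finset.notMem_erase a S
    simp only [Finset.mem_union] at haC
    push_neg at haC
    rw [Finset.disjoint_left]
    intro z hz hz'
    simp only [Finset.mem_insert, Finset.mem_filter, Finset.mem_union] at hz hz'
    rcases hz with rfl | ⟨hz1, hzx⟩
    · rcases hz' with h | ⟨h, _⟩
      · exact haC.2 h
      · exact haC.1 h
    · rcases hz' with h | ⟨_, h⟩
      · exact Finset.disjoint_left.mp hD hz1 h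
      · exact h hzx
  · intro u hu v hv huv
    simp only [Finset.coe_insert, Set.mem_insert_iff, Finset.coe_filter, Set.mem_setOf_eq] at hu hv
    rcases hu with rfl | ⟨hu1, hux⟩
    · rcases hv with rfl | ⟨hv1, hvx⟩
      · exact absurd rfl huv
      · exact Or.inr (hvx.trans hx1a)
    · rcases hv with rfl | ⟨hv1, hvx⟩
      · exact Or.inl (hux.trans hx1a)
      · exact h1 hu1 hv1 huv
  · intro u hu v hv huv
    simp only [Finset.coe_union, Set.mem_union, Finset.coe_filter, Set.mem_setOf_eq] at hu hv
    rcases hu with hu2 | ⟨hu1, hux⟩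
    · rcases hv with hv2 | ⟨hv1, hvx⟩
      · exact h2 hu2 hv2 huv
      · -- v ∈ C1 not ≤ x1, u ∈ C2 : comparable else v ≤ x1
        by_contra hcon
        push_neg at hcon
        exact hvx (hmax v hv1 u hu2 hcon.2 hcon.1)
    · rcases hv with hv2 | ⟨hv1, hvx⟩
      · by_contra hcon
        push_neg at hcon
        exact hux (hmax u hu1 v hv2 hcon.1 hcon.2)
      · exact h1 hu1 hv1 huv

theorem twoChainCover {P : Type*} [PartialOrder P] [DecidableEq P]
    (h111 : OneOneOneFree P) (S : Finset P) :
    ∃ A B : Finset P, A ∪ B = S ∧ Disjoint A B ∧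
      IsChain (· ≤ ·) (A : Set P) ∧ IsChain (· ≤ ·) (B : Set P) := by
  classical
  induction S using Finset.strongInduction with
  | _ S IH =>
  rcases S.eq_empty_or_nonempty with rfl | hne
  · exact ⟨∅, ∅, by simp, by simp, by simp, by simp⟩
  obtain ⟨a, ha, hamax⟩ := S.exists_maximal hne
  obtain ⟨C1, C2, hU, hD, h1, h2⟩ := IH (S.erase a) (Finset.erase_ssubset ha)
  -- facts about a
  have haC : a ∉ C1 ∪ C2 := by rw [hU]; exact Finset.notMem_erase a S
  simp only [Finset.mem_union] at haC
  push_neg at haC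
  have hmem : ∀ z, z ∈ C1 ∪ C2 → z ∈ S ∧ z ≠ a := by
    intro z hz
    rw [hU, Finset.mem_erase] at hz
    exact ⟨hz.2, hz.1⟩
  have hle_a : ∀ z, z ∈ C1 ∪ C2 → ¬ a ≤ z := by
    intro z hz haz
    obtain ⟨hzS, hza⟩ := hmem z hz
    exact not_lt_of_ge (hamax hzS haz) (lt_of_le_of_ne haz (Ne.symm hza))
  -- case split: is there an incomparable cross pair?
  by_cases hcross : ∃ u ∈ C1, ∃ v ∈ C2, ¬ u ≤ v ∧ ¬ v ≤ u
  · -- B1, B2 nonempty; take maxima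
    obtain ⟨u0, hu0, v0, hv0, huv1, huv2⟩ := hcross
    set B1 : Finset P := C1.filter (fun x => ∃ y ∈ C2, ¬ x ≤ y ∧ ¬ y ≤ x) with hB1
    set B2 : Finset P := C2.filter (fun y => ∃ x ∈ C1, ¬ x ≤ y ∧ ¬ y ≤ x) with hB2
    have hB1ne : B1.Nonempty := ⟨u0, by simp [hB1, hu0]; exact ⟨v0, hv0, huv1, huv2⟩⟩
    have hB2ne : B2.Nonempty := ⟨v0, by simp [hB2, hv0]; exact ⟨u0, hu0, huv1, huv2⟩⟩
    obtain ⟨x1, hx1B, hx1m⟩ := B1.exists_maximal hB1ne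
    obtain ⟨x2, hx2B, hx2m⟩ := B2.exists_maximal hB2ne
    have hx1C : x1 ∈ C1 := (Finset.mem_filter.mp hx1B).1
    have hx2C : x2 ∈ C2 := (Finset.mem_filter.mp hx2B).1
    -- maxima dominate
    have hmax1 : ∀ z ∈ B1, z ≤ x1 := by
      intro z hz
      have hzC : z ∈ C1 := (Finset.mem_filter.mp hz).1
      rcases eq_or_ne z x1 with rfl | hne'
      · exact le_refl _
      rcases h1 hzC hx1C hne' with h | h
      · exact h
      · exact absurd (lt_of_le_of_ne h (Ne.symm hne')) (not_lt_of_ge (hx1m hz h))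
    have hmax2 : ∀ z ∈ B2, z ≤ x2 := by
      intro z hz
      have hzC : z ∈ C2 := (Finset.mem_filter.mp hz).1
      rcases eq_or_ne z x2 with rfl | hne'
      · exact le_refl _
      rcases h2 hzC hx2C hne' with h | h
      · exact h
      · exact absurd (lt_of_le_of_ne h (Ne.symm hne')) (not_lt_of_ge (hx2m hz h))
    -- x1 and x2 incomparable (Galvin)
    have hx12 : ¬ x1 ≤ x2 ∧ ¬ x2 ≤ x1 := by
      constructor
      · intro h
        obtain ⟨y1, hy1C, hy1a, hy1b⟩ := (Finset.mem_filter.mp hx2B).2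
        have : y1 ∈ B1 := Finset.mem_filter.mpr ⟨hy1C, x2, hx2C, hy1a, hy1b⟩
        exact hy1a ((hmax1 y1 this).trans h)
      · intro h
        obtain ⟨y2, hy2C, hy2a, hy2b⟩ := (Finset.mem_filter.mp hx1B).2
        have : y2 ∈ B2 := Finset.mem_filter.mpr ⟨hy2C, x1, hx1C, hy2a, hy2b⟩
        exact hy2b ((hmax2 y2 this).trans h)
    -- by (1+1+1)-freeness, a is comparable to x1 or x2; a maximal so x_i ≤ a
    have hx1a' : x1 ≤ a ∨ x2 ≤ a := by
      by_contra hcon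
      push_neg at hcon
      have h1a : ¬ a ≤ x1 := hle_a x1 (Finset.mem_union_left _ hx1C)
      have h2a : ¬ a ≤ x2 := hle_a x2 (Finset.mem_union_right _ hx2C)
      have hne1 : a ≠ x1 := fun h => (hmem x1 (Finset.mem_union_left _ hx1C)).2 h.symm
      have hne2 : a ≠ x2 := fun h => (hmem x2 (Finset.mem_union_right _ hx2C)).2 h.symm
      have hne12 : x1 ≠ x2 := fun h => hx12.1 (h ▸ le_refl x1)
      exact h111 ⟨a, x1, x2, hne1, hne2, hne12, h1a, hcon.1, h2a, hcon.2,
        hx12.1, hx12.2⟩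
    rcases hx1a' with h | h
    · exact helperStep S a ha C1 C2 hU hD h1 h2 x1 h
        (fun u hu v hv h1' h2' => hmax1 u (Finset.mem_filter.mpr ⟨hu, v, hv, h1', h2'⟩))
    · obtain ⟨A, B, hab⟩ := helperStep S a ha C2 C1 (by rw [Finset.union_comm]; exact hU)
        hD.symm h2 h1 x2 h
        (fun u hu v hv h1' h2' => hmax2 u (Finset.mem_filter.mpr ⟨hu, v, hv, h2', h1'⟩))
      exact ⟨A, B, hab⟩
  · -- no cross incomparable pair: S.erase a is a chain
    push_neg at hcross
    refine ⟨S.erase a, {a}, ?_, ?_, ?_, ?_⟩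
    · rw [Finset.union_comm]
      exact Finset.insert_erase ha
    · simp [Finset.disjoint_singleton_right]
    · intro u hu v hv huv
      simp only [Finset.coe_erase, Set.mem_diff] at hu hv
      have hu' : u ∈ C1 ∪ C2 := by rw [hU]; exact Finset.mem_erase.mpr ⟨by simpa using hu.2, hu.1⟩
      have hv' : v ∈ C1 ∪ C2 := by rw [hU]; exact Finset.mem_erase.mpr ⟨by simpa using hv.2, hv.1⟩
      rw [Finset.mem_union] at hu' hv'
      rcases hu' with hu1 | hu2
      · rcases hv' with hv1 | hv2
        · exact h1 hu1 hv1 huv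
        · by_contra hcon
          push_neg at hcon
          exact hcon.2 (hcross u hu1 v hv2 hcon.1)
      · rcases hv' with hv1 | hv2
        · by_contra hcon
          push_neg at hcon
          exact hcon.1 (hcross v hv1 u hu2 hcon.2)
        · exact h2 hu2 hv2 huv
    · simp [Set.Subsingleton.isChain]

/-- A finite `(1+1+1)`-free poset with at least two elements that is irreducible with respect
to ordinal sum can be partitioned into two disjoint nonempty chains; in particular its width
is exactly 2. -/
theorem statement10 {P : Type*} [PartialOrder P] [Fintype P]
    (hn : 2 ≤ Fintype.card P)
    (h111 : OneOneOneFree P) (hirr : OrdinalSumIrreducible P) :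
    (∃ A B : Set P, A.Nonempty ∧ B.Nonempty ∧ Disjoint A B ∧ A ∪ B = Set.univ ∧
      IsChain (· ≤ ·) A ∧ IsChain (· ≤ ·) B) ∧
    (∃ a b : P, ¬ a ≤ b ∧ ¬ b ≤ a) ∧
    (∀ s : Set P, IsAntichain (· ≤ ·) s → Nat.card s ≤ 2) := by
  classical
  haveI hone : Nonempty P := Fintype.card_pos_iff.mp (by omega)
  -- incomparable pair
  have hpair : ∃ a b : P, ¬ a ≤ b ∧ ¬ b ≤ a := by
    by_contra hc
    push_neg at hc
    obtain ⟨m, _, hm⟩ := Finset.exists_minimal (s := (Finset.univ : Finset P)) Finset.univ_nonempty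
    obtain ⟨b0, hb0⟩ := Fintype.exists_ne_of_one_lt_card (by omega) m
    refine hirr ⟨{m}, {m}ᶜ, ⟨m, rfl⟩, ⟨b0, hb0⟩, disjoint_compl_right,
      Set.union_compl_self _, ?_⟩
    rintro a rfl b hb
    have hbm : b ≠ a := hb
    by_cases h : a ≤ b
    · exact lt_of_le_of_ne h (Ne.symm hbm)
    · exact absurd (lt_of_le_of_ne (hc a b h) hbm) (not_lt_of_ge (hm (Finset.mem_univ b) (hc a b h)))
  obtain ⟨a0, b0, hab1, hab2⟩ := hpair
  have hab : a0 ≠ b0 := fun h => hab1 (h ▸ le_refl a0)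
  obtain ⟨A, B, hU, hD, h1, h2⟩ := twoChainCover h111 Finset.univ
  have hmemU : ∀ z : P, z ∈ A ∨ z ∈ B := by
    intro z
    have : z ∈ A ∪ B := by rw [hU]; exact Finset.mem_univ z
    exact Finset.mem_union.mp this
  have hnotboth : ∀ C : Finset P, IsChain (· ≤ ·) (C : Set P) → ¬ (a0 ∈ C ∧ b0 ∈ C) := by
    rintro C hC ⟨h1', h2'⟩
    rcases hC h1' h2' hab with h | h
    · exact hab1 h
    · exact hab2 h
  refine ⟨⟨↑A, ↑B, ?_, ?_, by exact_mod_cast hD, ?_, h1, h2⟩, ⟨a0, b0, hab1, hab2⟩, ?_⟩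
  · rcases hmemU a0 with h | h
    · exact ⟨a0, h⟩
    · rcases hmemU b0 with h' | h'
      · exact ⟨b0, h'⟩
      · exact absurd ⟨h, h'⟩ (hnotboth B h2)
  · rcases hmemU a0 with h | h
    · rcases hmemU b0 with h' | h'
      · exact absurd ⟨h, h'⟩ (hnotboth A h1)
      · exact ⟨b0, h'⟩
    · exact ⟨a0, h⟩
  · rw [← Finset.coe_union, hU, Finset.coe_univ]
  · intro s hanti
    by_contra hcard
    push_neg at hcard
    have hfin : s.Finite := s.toFinite
    have h3 : 3 ≤ s.toFinset.card := by
      rw [Nat.card_coe_set_eq] at hcard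
      rw [← Set.ncard_eq_toFinset_card' s]
      omega
    obtain ⟨t, hts, htc⟩ := Finset.exists_subset_card_eq h3
    obtain ⟨x, y, z, hxy, hxz, hyz, rfl⟩ := Finset.card_eq_three.mp htc
    have hx : x ∈ s := Set.mem_toFinset.mp (hts (by simp))
    have hy : y ∈ s := Set.mem_toFinset.mp (hts (by simp))
    have hz : z ∈ s := Set.mem_toFinset.mp (hts (by simp))
    exact h111 ⟨x, y, z, hxy, hxz, hyz,
      hanti hx hy hxy, hanti hy hx hxy.symm,
      hanti hx hz hxz, hanti hz hx hxz.symm,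
      hanti hy hz hyz, hanti hz hy hyz.symm⟩
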